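/- Let X be a smooth projective surface over an algebraically closed field with Picard group generated by finitely many classes, let P be a nef ℚ-divisor with P² > 0, and let Null(P) be the set of irreducible curves C with P.C = 0. Then the intersection matrix of the curves in Null(P) is negative definite, and in particular Null(P) consists of finitely many curves. -/

import Mathlib

open scoped RealInnerProductSpace

/-- A set of nonzero vectors in a finite-dimensional real inner product space with
pairwise nonpositive inner products is finite. -/
lemma aux_finite_of_inner_nonpos {E : Type*} [NormedAddCommGroup E] [InnerProductSpace ℝ E]
    [FiniteDimensional ℝ E] (S : Set E) (h0 : (0 : E) ∉ S)
    (hpr : ∀ x ∈ S, ∀ y ∈ S, x ≠ y → ⟪x, y⟫ ≤ 0) : S.Finite := by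
  classical
  set g : S → E := fun x => (‖(x : E)‖)⁻¹ • (x : E) with hg
  have hxne : ∀ x : S, (x : E) ≠ 0 := fun x h => h0 (h ▸ x.2)
  have hgnorm : ∀ x : S, ‖g x‖ = 1 := fun x => norm_smul_inv_norm (hxne x)
  have hginner : ∀ x y : S, x ≠ y → ⟪g x, g y⟫ ≤ 0 := by
    intro x y hne
    have hVne : (x : E) ≠ (y : E) := fun h => hne (Subtype.ext h)
    have hB : ⟪(x : E), (y : E)⟫ ≤ 0 := hpr _ x.2 _ y.2 hVne
    rw [hg]
    simp only [real_inner_smul_left, real_inner_smul_right]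
    have h1 : (0:ℝ) ≤ (‖(x:E)‖)⁻¹ := inv_nonneg.mpr (norm_nonneg _)
    have h2 : (0:ℝ) ≤ (‖(y:E)‖)⁻¹ := inv_nonneg.mpr (norm_nonneg _)
    exact mul_nonpos_of_nonneg_of_nonpos h2 (mul_nonpos_of_nonneg_of_nonpos h1 hB)
  have hsep : ∀ x y : S, x ≠ y → 1 ≤ dist (g x) (g y) := by
    intro x y hne
    have h2 : ‖g x - g y‖ ^ 2 = ‖g x‖ ^ 2 - 2 * ⟪g x, g y⟫ + ‖g y‖ ^ 2 :=
      norm_sub_sq_real (g x) (g y)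
    have hle : (2:ℝ) ≤ ‖g x - g y‖ ^ 2 := by
      rw [h2, hgnorm x, hgnorm y]
      have := hginner x y hne
      nlinarith
    have : (1:ℝ) ≤ ‖g x - g y‖ := by nlinarith [norm_nonneg (g x - g y)]
    simpa [dist_eq_norm] using this
  have hginj : Function.Injective g := by
    intro x y h
    by_contra hne
    have := hsep x y hne
    rw [h, dist_self] at this
    linarith
  have hrange_sub : Set.range g ⊆ Metric.sphere (0 : E) 1 := by
    rintro _ ⟨x, rfl⟩
    simpa [mem_sphere_iff_norm] using hgnorm x
  have hcpt : IsCompact (Metric.sphere (0 : E) 1) := isCompact_sphere 0 1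
  have htb : TotallyBounded (Set.range g) := hcpt.totallyBounded.subset hrange_sub
  obtain ⟨t, htfin, htcov⟩ := (Metric.totallyBounded_iff.mp htb) (1/2) (by norm_num)
  set F : E → E := fun x =>
    if h : ∃ y ∈ t, x ∈ Metric.ball y (1/2) then h.choose else x with hF
  have hFspec : ∀ x ∈ Set.range g, F x ∈ t ∧ x ∈ Metric.ball (F x) (1/2) := by
    intro x hx
    have hcov := htcov hx
    simp only [Set.mem_iUnion] at hcov
    obtain ⟨y, hy, hxy⟩ := hcov
    have hex : ∃ y ∈ t, x ∈ Metric.ball y (1/2) := ⟨y, hy, hxy⟩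
    rw [hF]
    simp only [dif_pos hex]
    exact hex.choose_spec
  have hFim : (F '' Set.range g) ⊆ t := by
    rintro _ ⟨x, hx, rfl⟩
    exact (hFspec x hx).1
  have hFinj : Set.InjOn F (Set.range g) := by
    rintro _ ⟨x, rfl⟩ _ ⟨y, rfl⟩ hFeq
    by_contra hne
    have hxy : x ≠ y := fun h => hne (by rw [h])
    have h1 := (hFspec _ ⟨x, rfl⟩).2
    have h2 := (hFspec _ ⟨y, rfl⟩).2
    rw [hFeq] at h1
    have : dist (g x) (g y) < 1 := by
      calc dist (g x) (g y) ≤ dist (g x) (F (g y)) + dist (F (g y)) (g y) := dist_triangle _ _ _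
        _ < 1/2 + 1/2 := by
            rw [Metric.mem_ball] at h1 h2
            have h2' : dist (F (g y)) (g y) < 1/2 := by rwa [dist_comm]
            linarith
        _ = 1 := by norm_num
    exact absurd (hsep x y hxy) (by linarith)
  have hrange_fin : (Set.range g).Finite :=
    Set.Finite.of_finite_image (htfin.subset hFim) hFinj
  by_contra hinf
  have hinf' : S.Infinite := hinf
  haveI : Infinite S := hinf'.to_subtype
  exact absurd hrange_fin (Set.infinite_range_of_injective hginj)

/-- Let `X` be a smooth projective surface with finitely generated
Picard group, modeled by the finite-dimensional real Néron–Severi space `V` with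
symmetric intersection form `B` of signature `(1, ρ-1)` (Hodge index theorem: the form
is negative definite on the orthogonal complement of `P` when `B P P > 0`). Let
`Curves` be the set of classes of irreducible curves (nonzero, with pairwise
nonnegative intersections), `P` a nef class with `P² > 0`, and
`Null(P) = {C ∈ Curves | P.C = 0}`. Then the intersection form is negative definite
on the span of `Null(P)`, and `Null(P)` is finite. -/
theorem null_locus_negative_definite_and_finite
    {V : Type*} [AddCommGroup V] [Module ℝ V] [FiniteDimensional ℝ V]
    (B : V →ₗ[ℝ] V →ₗ[ℝ] ℝ)
    (hsymm : ∀ x y : V, B x y = B y x)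
    (Curves : Set V) (P : V)
    (hP2 : 0 < B P P)
    (hnef : ∀ C ∈ Curves, 0 ≤ B P C)
    (hsig : ∀ x : V, x ≠ 0 → B P x = 0 → B x x < 0)
    (hC0 : ∀ C ∈ Curves, C ≠ 0)
    (hpair : ∀ C ∈ Curves, ∀ C' ∈ Curves, C ≠ C' → 0 ≤ B C C') :
    (∀ x ∈ Submodule.span ℝ {C | C ∈ Curves ∧ B P C = 0}, x ≠ 0 → B x x < 0) ∧
    {C | C ∈ Curves ∧ B P C = 0}.Finite := by
  set N : Set V := {C | C ∈ Curves ∧ B P C = 0} with hNdef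
  set U : Submodule ℝ V := LinearMap.ker (B P) with hU
  have hNker : N ⊆ (U : Set V) := fun C hC => LinearMap.mem_ker.mpr hC.2
  have hspan : Submodule.span ℝ N ≤ U := Submodule.span_le.mpr hNker
  have hdef : ∀ x ∈ Submodule.span ℝ N, x ≠ 0 → B x x < 0 := fun x hx hx0 =>
    hsig x hx0 (LinearMap.mem_ker.mp (hspan hx))
  refine ⟨hdef, ?_⟩
  have hUneg : ∀ x : U, (x : V) ≠ 0 → B x x < 0 := fun x hx =>
    hsig x hx (LinearMap.mem_ker.mp x.2)
  letI c : InnerProductSpace.Core ℝ U :=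
    { inner := fun x y => -(B x y)
      conj_inner_symm := fun x y => by
        simp only [starRingEnd_apply, star_trivial]
        rw [hsymm (y : V) (x : V)]
      re_inner_nonneg := by
        intro x
        rcases eq_or_ne (x : V) 0 with h | h
        · simp [h]
        · have := hUneg x h
          simp only [RCLike.re_to_real]
          linarith
      add_left := fun x y z => by
        simp only [Submodule.coe_add, map_add, LinearMap.add_apply]
        ring
      smul_left := fun x y r => by
        simp only [Submodule.coe_smul, map_smul, LinearMap.smul_apply, smul_eq_mul,
          starRingEnd_apply, star_trivial]
        ring
      definite := by
        intro x hx
        by_contra h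
        have hx0 : (x : V) ≠ 0 := fun h' => h (Subtype.ext h')
        have hneg := hUneg x hx0
        have : -(B x x) = 0 := hx
        linarith }
  letI : NormedAddCommGroup U := @InnerProductSpace.Core.toNormedAddCommGroup ℝ U _ _ _ c
  letI : InnerProductSpace ℝ U := InnerProductSpace.ofCore c.toCore
  haveI : FiniteDimensional ℝ U := inferInstance
  have hinner : ∀ x y : U, ⟪x, y⟫ = -(B x y) := fun x y => rfl
  set S : Set U := Subtype.val ⁻¹' N with hS
  have h0S : (0 : U) ∉ S := by
    intro h
    exact hC0 0 h.1 rfl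
  have hprS : ∀ x ∈ S, ∀ y ∈ S, x ≠ y → ⟪x, y⟫ ≤ 0 := by
    intro x hx y hy hne
    have hVne : (x : V) ≠ (y : V) := fun h => hne (Subtype.ext h)
    have := hpair _ hx.1 _ hy.1 hVne
    rw [hinner]
    linarith
  have hSfin : S.Finite := aux_finite_of_inner_nonpos S h0S hprS
  have hNeq : N = Subtype.val '' S := by
    ext C
    constructor
    · intro hC
      exact ⟨⟨C, hNker hC⟩, hC, rfl⟩
    · rintro ⟨x, hx, rfl⟩
      exact hx
  rw [hNeq]
  exact hSfin.image _
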